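/- In a Saccheri quadrilateral in the hyperbolic plane, the summit is strictly longer than the base: |CD| > |AB|. -/

import Mathlib

/-! We work in the Klein (Beltrami–Klein) model of the hyperbolic plane of
constant curvature −1: points are the open unit ball of `E2` and geodesics are
the Euclidean chords of the ball. `kdist` is the hyperbolic distance and
`kangle a b c` the hyperbolic angle at `b` between the geodesic segments to
`a` and to `c` (via the hyperbolic law of cosines). -/

open Real Metric MeasureTheory

noncomputable section

abbrev E2 := EuclideanSpace ℝ (Fin 2)

/-- Inverse hyperbolic cosine. -/
def arcosh (x : ℝ) : ℝ := Real.log (x + Real.sqrt (x ^ 2 - 1))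

/-- Hyperbolic distance in the Klein model (curvature −1). -/
def kdist (x y : E2) : ℝ :=
  _root_.arcosh ((1 - (inner ℝ x y : ℝ)) / Real.sqrt ((1 - ‖x‖ ^ 2) * (1 - ‖y‖ ^ 2)))

/-- Hyperbolic angle at `b` between the geodesic segments from `b` to `a` and
from `b` to `c`. -/
def kangle (a b c : E2) : ℝ :=
  Real.arccos ((Real.cosh (kdist b a) * Real.cosh (kdist b c) - Real.cosh (kdist a c)) /
    (Real.sinh (kdist b a) * Real.sinh (kdist b c)))

/-- A geodesic line of the Klein model is (the chord of) a one-dimensional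
affine subspace. -/
def IsKleinLine (l : AffineSubspace ℝ E2) : Prop :=
  ∃ x y : E2, x ≠ y ∧ l = affineSpan ℝ {x, y}

/-- The chord of a line: the actual geodesic line of the hyperbolic plane. -/
def chord (l : AffineSubspace ℝ E2) : Set E2 := (l : Set E2) ∩ ball (0 : E2) 1

/-- Hyperbolic distance from a point to a set. -/
def kdistSet (x : E2) (s : Set E2) : ℝ := sInf (kdist x '' s)


set_option maxHeartbeats 1000000

namespace SaccheriAux

/-- The normalized Lorentz Gram entry (equals `cosh` of `kdist`). -/
def kg (x y : E2) : ℝ :=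
  (1 - (inner ℝ x y : ℝ)) / Real.sqrt ((1 - ‖x‖ ^ 2) * (1 - ‖y‖ ^ 2))

lemma kdist_eq_kg (x y : E2) : kdist x y = _root_.arcosh (kg x y) := rfl

lemma kg_symm (x y : E2) : kg x y = kg y x := by
  unfold kg; rw [real_inner_comm, mul_comm]

/-- Determinant of the symmetric 4×4 Lorentz Gram matrix. -/
def detM (na nb nc nd mab mac mad mbc mbd mcd : ℝ) : ℝ :=
  na * nb * nc * nd - na * nb * mcd * mcd - na * mbc * mbc * nd + na * mbc * mcd * mbd + na * mbd * mbc * mcd - na * mbd * nc * mbd - mab * mab * nc * nd + mab * mab * mcd * mcd + mab * mbc * mac * nd - mab * mbc * mcd * mad - mab * mbd * mac * mcd + mab * mbd * nc * mad + mac * mab * mbc * nd - mac * mab * mcd * mbd - mac * nb * mac * nd + mac * nb * mcd * mad + mac * mbd * mac * mbd - mac * mbd * mbc * mad - mad * mab * mbc * mcd + mad * mab * nc * mbd + mad * nb * mac * mcd - mad * nb * nc * mad - mad * mbc * mac * mbd + mad * mbc * mbc * mad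

/-- Determinant of the normalized Gram matrix (unit diagonal). -/
def detG (q p gad gbc gbd r : ℝ) : ℝ :=
  1 * 1 * 1 * 1 - 1 * 1 * r * r - 1 * gbc * gbc * 1 + 1 * gbc * r * gbd + 1 * gbd * gbc * r - 1 * gbd * 1 * gbd - q * q * 1 * 1 + q * q * r * r + q * gbc * p * 1 - q * gbc * r * gad - q * gbd * p * r + q * gbd * 1 * gad + p * q * gbc * 1 - p * q * r * gbd - p * 1 * p * 1 + p * 1 * r * gad + p * gbd * p * gbd - p * gbd * gbc * gad - gad * q * gbc * r + gad * q * 1 * gbd + gad * 1 * p * r - gad * 1 * 1 * gad - gad * gbc * p * gbd + gad * gbc * gbc * gad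

lemma ratdet (sA sB sC sD mab mac mad mbc mbd mcd : ℝ)
    (hA : sA ≠ 0) (hB : sB ≠ 0) (hC : sC ≠ 0) (hD : sD ≠ 0)
    (hgram : detM (sA^2) (sB^2) (sC^2) (sD^2) mab mac mad mbc mbd mcd = 0) :
    detG (mab/(sA*sB)) (mac/(sA*sC)) (mad/(sA*sD)) (mbc/(sB*sC)) (mbd/(sB*sD))
      (mcd/(sC*sD)) = 0 := by
  have e1 : mab/(sA*sB) * (sA*sB) = mab := div_mul_cancel₀ _ (mul_ne_zero hA hB)
  have e2 : mac/(sA*sC) * (sA*sC) = mac := div_mul_cancel₀ _ (mul_ne_zero hA hC)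
  have e3 : mad/(sA*sD) * (sA*sD) = mad := div_mul_cancel₀ _ (mul_ne_zero hA hD)
  have e4 : mbc/(sB*sC) * (sB*sC) = mbc := div_mul_cancel₀ _ (mul_ne_zero hB hC)
  have e5 : mbd/(sB*sD) * (sB*sD) = mbd := div_mul_cancel₀ _ (mul_ne_zero hB hD)
  have e6 : mcd/(sC*sD) * (sC*sD) = mcd := div_mul_cancel₀ _ (mul_ne_zero hC hD)
  have key : detG (mab/(sA*sB)) (mac/(sA*sC)) (mad/(sA*sD)) (mbc/(sB*sC)) (mbd/(sB*sD))
      (mcd/(sC*sD)) * (sA*sB*sC*sD)^2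
      = detM (sA^2) (sB^2) (sC^2) (sD^2) (mab/(sA*sB) * (sA*sB)) (mac/(sA*sC) * (sA*sC))
        (mad/(sA*sD) * (sA*sD)) (mbc/(sB*sC) * (sB*sC)) (mbd/(sB*sD) * (sB*sD))
        (mcd/(sC*sD) * (sC*sD)) := by
    unfold detG detM
    ring
  rw [e1, e2, e3, e4, e5, e6] at key
  have hz := key.trans hgram
  have hne : ((sA*sB*sC*sD)^2 : ℝ) ≠ 0 := by positivity
  exact (mul_eq_zero.mp hz).resolve_right hne

lemma arcosh_lt_arcosh {x y : ℝ} (hx : 1 ≤ x) (hxy : x < y) : _root_.arcosh x < _root_.arcosh y := by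
  unfold _root_.arcosh
  have h1 : (0:ℝ) < x + Real.sqrt (x^2-1) := by positivity
  apply Real.log_lt_log h1
  have : Real.sqrt (x^2-1) ≤ Real.sqrt (y^2-1) := by
    apply Real.sqrt_le_sqrt; nlinarith
  linarith

lemma arcosh_pos {x : ℝ} (hx : 1 < x) : 0 < _root_.arcosh x := by
  unfold _root_.arcosh
  apply Real.log_pos
  nlinarith [Real.sqrt_nonneg (x^2-1)]

lemma cosh_arcosh {x : ℝ} (hx : 1 ≤ x) : Real.cosh (_root_.arcosh x) = x := by
  unfold _root_.arcosh
  have hs : Real.sqrt (x^2-1) ^ 2 = x^2 - 1 := Real.sq_sqrt (by nlinarith)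
  have h1 : (0:ℝ) < x + Real.sqrt (x^2-1) := by positivity
  rw [Real.cosh_eq, Real.exp_log h1, Real.exp_neg, Real.exp_log h1]
  have h2 : (x + Real.sqrt (x^2-1))⁻¹ = x - Real.sqrt (x^2-1) :=
    inv_eq_of_mul_eq_one_right (by nlinarith)
  rw [h2]; ring

lemma lorentz_cs {x y : E2} (hx : ‖x‖ < 1) (hy : ‖y‖ < 1) (hxy : x ≠ y) :
    (1 - ‖x‖ ^ 2) * (1 - ‖y‖ ^ 2) < (1 - (inner ℝ x y : ℝ)) ^ 2 := by
  have hd : 0 < ‖x - y‖ ^ 2 := by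
    have h : (0:ℝ) < ‖x - y‖ := norm_pos_iff.mpr (sub_ne_zero.mpr hxy)
    positivity
  have hb1 : (0:ℝ) < 1 - ‖y‖ ^ 2 := by
    have := pow_lt_one₀ (norm_nonneg y) hy two_ne_zero
    linarith
  have hexp : ‖x - y‖ ^ 2 = ‖x‖ ^ 2 - 2 * (inner ℝ x y : ℝ) + ‖y‖ ^ 2 := norm_sub_sq_real x y
  have hd' : (0:ℝ) < (1 - ‖y‖ ^ 2) * (‖x‖ ^ 2 - 2 * (inner ℝ x y : ℝ) + ‖y‖ ^ 2) := by
    rw [← hexp]; exact mul_pos hb1 hd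
  nlinarith [sq_nonneg ((inner ℝ x y : ℝ) - ‖y‖ ^ 2), hd']

lemma kg_gt_one {x y : E2} (hx : ‖x‖ < 1) (hy : ‖y‖ < 1) (hxy : x ≠ y) : 1 < kg x y := by
  have hx2 : (0:ℝ) < 1 - ‖x‖ ^ 2 := by
    have := pow_lt_one₀ (norm_nonneg x) hx two_ne_zero
    linarith
  have hy2 : (0:ℝ) < 1 - ‖y‖ ^ 2 := by
    have := pow_lt_one₀ (norm_nonneg y) hy two_ne_zero
    linarith
  have hs : (inner ℝ x y : ℝ) < 1 := by
    have h := real_inner_le_norm x y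
    nlinarith [norm_nonneg x, norm_nonneg y]
  have h1 : (0:ℝ) < 1 - (inner ℝ x y : ℝ) := by linarith
  have hpos : (0:ℝ) < (1 - ‖x‖ ^ 2) * (1 - ‖y‖ ^ 2) := mul_pos hx2 hy2
  have hsq : Real.sqrt ((1 - ‖x‖ ^ 2) * (1 - ‖y‖ ^ 2)) < 1 - (inner ℝ x y : ℝ) :=
    (Real.sqrt_lt' h1).mpr (by nlinarith [lorentz_cs hx hy hxy])
  unfold kg
  exact (one_lt_div (Real.sqrt_pos.mpr hpos)).mpr hsq

lemma cosh_kdist {x y : E2} (hx : ‖x‖ < 1) (hy : ‖y‖ < 1) (hxy : x ≠ y) :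
    Real.cosh (kdist x y) = kg x y := by
  rw [kdist_eq_kg]; exact cosh_arcosh (kg_gt_one hx hy hxy).le

lemma sinh_kdist_pos {x y : E2} (hx : ‖x‖ < 1) (hy : ‖y‖ < 1) (hxy : x ≠ y) :
    0 < Real.sinh (kdist x y) := by
  rw [kdist_eq_kg]
  exact Real.sinh_pos_iff.mpr (arcosh_pos (kg_gt_one hx hy hxy))

end SaccheriAux

open SaccheriAux

/-- In a Saccheri quadrilateral of the hyperbolic plane (base `AB`, equal legs
`AC` and `BD` perpendicular to `AB` at `A` and `B` on the same side, summit
`CD`), the summit is strictly longer than the base: `|CD| > |AB|`. -/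
theorem saccheri_quadrilateral_summit_longer_than_base
    (A B C D : E2) (hA : A ∈ ball (0 : E2) 1) (hB : B ∈ ball (0 : E2) 1)
    (hC : C ∈ ball (0 : E2) 1) (hD : D ∈ ball (0 : E2) 1)
    (hAB : A ≠ B)
    (hside : (affineSpan ℝ ({A, B} : Set E2)).SSameSide C D)
    (a1 : kangle C A B = π / 2) (a2 : kangle D B A = π / 2)
    (hlegs : kdist A C = kdist B D) :
    kdist C D > kdist A B := by
    -- All four vertices are in the open unit ball.
  have hA' : ‖A‖ < 1 := by simpa [Metric.mem_ball, dist_zero_right] using hA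
  have hB' : ‖B‖ < 1 := by simpa [Metric.mem_ball, dist_zero_right] using hB
  have hC' : ‖C‖ < 1 := by simpa [Metric.mem_ball, dist_zero_right] using hC
  have hD' : ‖D‖ < 1 := by simpa [Metric.mem_ball, dist_zero_right] using hD
  have hnA : (0:ℝ) < 1 - ‖A‖ ^ 2 := by
    have := pow_lt_one₀ (norm_nonneg A) hA' two_ne_zero
    linarith
  have hnB : (0:ℝ) < 1 - ‖B‖ ^ 2 := by
    have := pow_lt_one₀ (norm_nonneg B) hB' two_ne_zero
    linarith
  have hnC : (0:ℝ) < 1 - ‖C‖ ^ 2 := by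
    have := pow_lt_one₀ (norm_nonneg C) hC' two_ne_zero
    linarith
  have hnD : (0:ℝ) < 1 - ‖D‖ ^ 2 := by
    have := pow_lt_one₀ (norm_nonneg D) hD' two_ne_zero
    linarith
  -- Distinctness of the vertices.
  have hAin : A ∈ affineSpan ℝ ({A, B} : Set E2) :=
    subset_affineSpan ℝ _ (Set.mem_insert _ _)
  have hBin : B ∈ affineSpan ℝ ({A, B} : Set E2) :=
    subset_affineSpan ℝ _ (Set.mem_insert_of_mem _ rfl)
  have hAC : A ≠ C := fun h => hside.2.1 (h ▸ hAin)
  have hBC : B ≠ C := fun h => hside.2.1 (h ▸ hBin)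
  have hAD : A ≠ D := fun h => hside.2.2 (h ▸ hAin)
  have hBD : B ≠ D := fun h => hside.2.2 (h ▸ hBin)
  -- Gram entries are > 1 for distinct points.
  have hQ : 1 < kg A B := kg_gt_one hA' hB' hAB
  have hP : 1 < kg A C := kg_gt_one hA' hC' hAC
  have hPBD : 1 < kg B D := kg_gt_one hB' hD' hBD
  -- Equal legs.
  have hlegs' : kg B D = kg A C := by
    rw [kdist_eq_kg, kdist_eq_kg] at hlegs
    by_contra hne
    rcases lt_or_gt_of_ne hne with h | h
    · exact absurd hlegs.symm (ne_of_lt (arcosh_lt_arcosh hPBD.le h))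
    · exact absurd hlegs (ne_of_lt (arcosh_lt_arcosh hP.le h))
  -- Unpack the right-angle hypotheses.
  unfold kangle at a1 a2
  rw [Real.arccos_eq_pi_div_two] at a1 a2
  have den1 : Real.sinh (kdist A C) * Real.sinh (kdist A B) ≠ 0 :=
    ne_of_gt (mul_pos (sinh_kdist_pos hA' hC' hAC) (sinh_kdist_pos hA' hB' hAB))
  have den2 : Real.sinh (kdist B D) * Real.sinh (kdist B A) ≠ 0 :=
    ne_of_gt (mul_pos (sinh_kdist_pos hB' hD' hBD) (sinh_kdist_pos hB' hA' hAB.symm))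
  have num1 : Real.cosh (kdist A C) * Real.cosh (kdist A B) - Real.cosh (kdist C B) = 0 :=
    (div_eq_zero_iff.mp a1).resolve_right den1
  have num2 : Real.cosh (kdist B D) * Real.cosh (kdist B A) - Real.cosh (kdist D A) = 0 :=
    (div_eq_zero_iff.mp a2).resolve_right den2
  rw [cosh_kdist hA' hC' hAC, cosh_kdist hA' hB' hAB,
      cosh_kdist hC' hB' (Ne.symm hBC)] at num1
  rw [cosh_kdist hB' hD' hBD, cosh_kdist hB' hA' hAB.symm,
      cosh_kdist hD' hA' (Ne.symm hAD)] at num2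
  have h1 : kg B C = kg A C * kg A B := by rw [kg_symm B C]; linarith
  have h2 : kg A D = kg A C * kg A B := by
    rw [kg_symm A D]
    rw [kg_symm B A, hlegs'] at num2
    linarith
  -- The Gram determinant vanishes (the four Lorentz lifts live in 3-space).
  have hsA0 : Real.sqrt (1 - ‖A‖ ^ 2) ≠ 0 := (Real.sqrt_pos.mpr hnA).ne'
  have hsB0 : Real.sqrt (1 - ‖B‖ ^ 2) ≠ 0 := (Real.sqrt_pos.mpr hnB).ne'
  have hsC0 : Real.sqrt (1 - ‖C‖ ^ 2) ≠ 0 := (Real.sqrt_pos.mpr hnC).ne'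
  have hsD0 : Real.sqrt (1 - ‖D‖ ^ 2) ≠ 0 := (Real.sqrt_pos.mpr hnD).ne'
  have hcoord : ∀ x y : E2, (inner ℝ x y : ℝ) = x 0 * y 0 + x 1 * y 1 := by
    intro x y
    simp [PiLp.inner_apply, Fin.sum_univ_two, RCLike.inner_apply, conj_trivial]; ring
  have hnormc : ∀ x : E2, ‖x‖ ^ 2 = x 0 ^ 2 + x 1 ^ 2 := by
    intro x; rw [← real_inner_self_eq_norm_sq, hcoord]; ring
  have hgram : detM (Real.sqrt (1 - ‖A‖ ^ 2) ^ 2) (Real.sqrt (1 - ‖B‖ ^ 2) ^ 2)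
      (Real.sqrt (1 - ‖C‖ ^ 2) ^ 2) (Real.sqrt (1 - ‖D‖ ^ 2) ^ 2)
      (1 - (inner ℝ A B : ℝ)) (1 - (inner ℝ A C : ℝ)) (1 - (inner ℝ A D : ℝ))
      (1 - (inner ℝ B C : ℝ)) (1 - (inner ℝ B D : ℝ)) (1 - (inner ℝ C D : ℝ)) = 0 := by
    rw [Real.sq_sqrt hnA.le, Real.sq_sqrt hnB.le, Real.sq_sqrt hnC.le, Real.sq_sqrt hnD.le]
    unfold detM
    rw [hcoord A B, hcoord A C, hcoord A D, hcoord B C, hcoord B D, hcoord C D,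
        hnormc A, hnormc B, hnormc C, hnormc D]
    ring
  have h0 := ratdet _ _ _ _ _ _ _ _ _ _ hsA0 hsB0 hsC0 hsD0 hgram
  have eq_ab : kg A B = (1 - (inner ℝ A B : ℝ)) /
      (Real.sqrt (1 - ‖A‖ ^ 2) * Real.sqrt (1 - ‖B‖ ^ 2)) := by
    unfold kg; rw [Real.sqrt_mul hnA.le]
  have eq_ac : kg A C = (1 - (inner ℝ A C : ℝ)) /
      (Real.sqrt (1 - ‖A‖ ^ 2) * Real.sqrt (1 - ‖C‖ ^ 2)) := by
    unfold kg; rw [Real.sqrt_mul hnA.le]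
  have eq_ad : kg A D = (1 - (inner ℝ A D : ℝ)) /
      (Real.sqrt (1 - ‖A‖ ^ 2) * Real.sqrt (1 - ‖D‖ ^ 2)) := by
    unfold kg; rw [Real.sqrt_mul hnA.le]
  have eq_bc : kg B C = (1 - (inner ℝ B C : ℝ)) /
      (Real.sqrt (1 - ‖B‖ ^ 2) * Real.sqrt (1 - ‖C‖ ^ 2)) := by
    unfold kg; rw [Real.sqrt_mul hnB.le]
  have eq_bd : kg B D = (1 - (inner ℝ B D : ℝ)) /
      (Real.sqrt (1 - ‖B‖ ^ 2) * Real.sqrt (1 - ‖D‖ ^ 2)) := by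
    unfold kg; rw [Real.sqrt_mul hnB.le]
  have eq_cd : kg C D = (1 - (inner ℝ C D : ℝ)) /
      (Real.sqrt (1 - ‖C‖ ^ 2) * Real.sqrt (1 - ‖D‖ ^ 2)) := by
    unfold kg; rw [Real.sqrt_mul hnC.le]
  rw [← eq_ab, ← eq_ac, ← eq_ad, ← eq_bc, ← eq_bd, ← eq_cd] at h0
  rw [h1, h2, hlegs'] at h0
  -- Factor the resulting quadratic in `kg C D`.
  have hfact : ((kg A B) ^ 2 - 1) *
      ((kg C D) - ((kg A C) ^ 2 * (kg A B) + (kg A C) ^ 2 - 1)) *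
      ((kg C D) - ((kg A C) ^ 2 * (kg A B) - (kg A C) ^ 2 + 1)) = 0 := by
    unfold detG at h0
    linear_combination h0
  have hr : kg A B < kg C D := by
    have hp2 : (0:ℝ) < kg A C ^ 2 - 1 := by nlinarith
    rcases mul_eq_zero.mp hfact with h | h
    · rcases mul_eq_zero.mp h with h' | h'
      · nlinarith [sq_nonneg (kg A B - 1)]
      · nlinarith [mul_pos hp2 (show (0:ℝ) < kg A B + 1 by linarith)]
    · nlinarith [mul_pos hp2 (show (0:ℝ) < kg A B - 1 by linarith)]
  show kdist A B < kdist C D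
  rw [kdist_eq_kg A B, kdist_eq_kg C D]
  exact arcosh_lt_arcosh hQ.le hr

end
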